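/- Let Γ be a Blackwell game and let i be a player whose payoff function f_i is tail-measurable. Then player i's minmax value and maxmin value are independent of the history: v̄_i = v̄_i(h) and v_i = v_i(h) for every history h ∈ H. -/
import Mathlib


open MeasureTheory

namespace Blackwell

/-- The set of plays: infinite streams of action profiles. -/
abbrev Play {ι : Type*} (Ac : ι → Type*) : Type _ := ℕ → ∀ j, Ac j

/-- A behavior strategy of player `i`: a mixed action after every finite history.
A history of length `t` is encoded by the first `t` coordinates of a play, and the
strategy is required to depend only on these coordinates. -/
structure Strategy {ι : Type*} (Ac : ι → Type*) (i : ι) where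
  act : ℕ → Play Ac → PMF (Ac i)
  depends_on_past : ∀ (t : ℕ) (p q : Play Ac), (∀ s, s < t → p s = q s) → act t p = act t q

/-- A strategy profile: a behavior strategy for every player. -/
abbrev Profile {ι : Type*} (Ac : ι → Type*) : Type _ := ∀ i, Strategy Ac i

/-- The assignment, to each strategy profile `σ`, of the induced (Ionescu–Tulcea)
probability measure `P_σ` on the set of plays; it is uniquely characterized by the
probabilities it assigns to cylinder sets. -/
structure PlayMeasure {ι : Type*} [Fintype ι] (Ac : ι → Type*)
    [∀ i, MeasurableSpace (Ac i)] where
  μ : Profile Ac → Measure (Play Ac)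
  isProb : ∀ σ, IsProbabilityMeasure (μ σ)
  cyl : ∀ (σ : Profile Ac) (n : ℕ) (p : Play Ac),
    μ σ {q | ∀ t, t < n → q t = p t}
      = ∏ t ∈ Finset.range n, ∏ i, ((σ i).act t p) (p t i)

variable {ι : Type*} [Fintype ι] [DecidableEq ι] [Nonempty ι]
  {Ac : ι → Type*} [∀ i, Fintype (Ac i)] [∀ i, Nonempty (Ac i)]
  [∀ i, MeasurableSpace (Ac i)] [∀ i, DiscreteMeasurableSpace (Ac i)]

/-- The expected payoff `E_σ[f]` of a strategy profile `σ` for payoff function `f`. -/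
noncomputable def expPay (PM : PlayMeasure Ac) (σ : Profile Ac) (f : Play Ac → ℝ) : ℝ :=
  ∫ p, f p ∂(PM.μ σ)

/-- Concatenation of the history given by the first `n` coordinates of `h` with the play `q`. -/
def splice (n : ℕ) (h q : Play Ac) : Play Ac := fun t => if t < n then h t else q (t - n)

/-- The continuation of a strategy in the subgame that starts at the history
given by the first `n` coordinates of `h`. -/
def Strategy.shift {i : ι} (σi : Strategy Ac i) (n : ℕ) (h : Play Ac) : Strategy Ac i where
  act t q := σi.act (n + t) (splice n h q)
  depends_on_past := by
    intro t p q hpq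
    refine σi.depends_on_past _ _ _ ?_
    intro s hs
    simp only [splice]
    by_cases hsn : s < n
    · simp [hsn]
    · simp only [if_neg hsn]
      exact hpq (s - n) (by omega)

/-- The expected payoff `E_σ[f ∣ h]` in the subgame that starts at the history
given by the first `n` coordinates of `h`. -/
noncomputable def subExp (PM : PlayMeasure Ac) (σ : Profile Ac) (f : Play Ac → ℝ)
    (n : ℕ) (h : Play Ac) : ℝ :=
  ∫ q, f (splice n h q) ∂(PM.μ (fun i => (σ i).shift n h))

/-- The minmax value of player `i`. -/
noncomputable def minmax (PM : PlayMeasure Ac) (f : Play Ac → ℝ) (i : ι) : ℝ :=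
  ⨅ τ : Profile Ac, ⨆ σi : Strategy Ac i, expPay PM (Function.update τ i σi) f

/-- The maxmin value of player `i`. -/
noncomputable def maxmin (PM : PlayMeasure Ac) (f : Play Ac → ℝ) (i : ι) : ℝ :=
  ⨆ σi : Strategy Ac i, ⨅ τ : Profile Ac, expPay PM (Function.update τ i σi) f

/-- The minmax value of player `i` in the subgame that starts at the history
given by the first `n` coordinates of `h`. -/
noncomputable def subMinmax (PM : PlayMeasure Ac) (f : Play Ac → ℝ) (i : ι)
    (n : ℕ) (h : Play Ac) : ℝ :=
  ⨅ τ : Profile Ac, ⨆ σi : Strategy Ac i, subExp PM (Function.update τ i σi) f n h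

/-- The maxmin value of player `i` in the subgame that starts at the history
given by the first `n` coordinates of `h`. -/
noncomputable def subMaxmin (PM : PlayMeasure Ac) (f : Play Ac → ℝ) (i : ι)
    (n : ℕ) (h : Play Ac) : ℝ :=
  ⨆ σi : Strategy Ac i, ⨅ τ : Profile Ac, subExp PM (Function.update τ i σi) f n h

/-- A strategy profile `σ` is an `ε`-equilibrium if no player can gain more than `ε`
by a unilateral deviation. -/
def IsEpsEquilibrium (PM : PlayMeasure Ac) (f : ι → Play Ac → ℝ) (ε : ℝ)
    (σ : Profile Ac) : Prop :=
  ∀ (i : ι) (σi : Strategy Ac i),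
    expPay PM (Function.update σ i σi) (f i) ≤ expPay PM σ (f i) + ε

/-- A payoff function is tail-measurable if changing finitely many coordinates of the
play does not change its value. -/
def TailMeasurable (f : Play Ac → ℝ) : Prop :=
  ∀ p q : Play Ac, (∃ N, ∀ t, N ≤ t → p t = q t) → f p = f q

/-- A payoff function is bounded. -/
def BddPayoff (f : Play Ac → ℝ) : Prop := ∃ C, ∀ p, |f p| ≤ C

/-! ### Auxiliary material -/

open scoped ENNReal

theorem Strategy.ext2 {i : ι} {σ τ : Strategy Ac i} (h : σ.act = τ.act) : σ = τ := by
  cases σ; cases τ; cases h; rfl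

instance {j : ι} : Nonempty (Strategy Ac j) :=
  ⟨⟨fun _ _ => PMF.pure (Classical.arbitrary _), fun _ _ _ _ => rfl⟩⟩

instance : Nonempty (Play Ac) := ⟨fun _ j => Classical.arbitrary (Ac j)⟩

/-- Extension of a finite history to a play, by an arbitrary tail. -/
noncomputable def wbar (n : ℕ) (w : Fin n → ∀ j, Ac j) : Play Ac :=
  fun t => if h : t < n then w ⟨t, h⟩ else fun j => Classical.arbitrary (Ac j)

lemma wbar_lt {n : ℕ} (w : Fin n → ∀ j, Ac j) {t : ℕ} (ht : t < n) :
    wbar n w t = w ⟨t, ht⟩ := dif_pos ht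

/-- Cylinder sets. -/
def cylSet (n : ℕ) (p : Play Ac) : Set (Play Ac) := {q | ∀ t, t < n → q t = p t}

lemma measurableSet_cylSet (n : ℕ) (p : Play Ac) : MeasurableSet (cylSet (Ac := Ac) n p) := by
  have h : cylSet (Ac := Ac) n p
      = ⋂ (t : Fin n), ⋂ (j : ι), (fun q : Play Ac => q t j) ⁻¹' {p t j} := by
    ext q
    simp only [cylSet, Set.mem_setOf_eq, Set.mem_iInter, Set.mem_preimage,
      Set.mem_singleton_iff]
    constructor
    · intro hq t j; rw [hq t t.2]
    · intro hq t ht; funext j; exact hq ⟨t, ht⟩ j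
  rw [h]
  exact MeasurableSet.iInter fun t => MeasurableSet.iInter fun j =>
    ((measurable_pi_apply j).comp (measurable_pi_apply (t : ℕ))) (MeasurableSet.singleton _)

/-- Cylinders of depth at least `n`. -/
def cylSets (n : ℕ) : Set (Set (Play Ac)) :=
  {C | ∃ m, n ≤ m ∧ ∃ p : Play Ac, C = cylSet m p}

lemma cylSet_inter_of_le {m m' : ℕ} (hmm : m ≤ m') {p p' : Play Ac}
    (hp : ∀ t, t < m → p t = p' t) :
    cylSet (Ac := Ac) m p ∩ cylSet m' p' = cylSet m' p' := by
  apply Set.inter_eq_self_of_subset_right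
  intro q hq t ht
  rw [hq t (lt_of_lt_of_le ht hmm), hp t ht]

lemma isPiSystem_cylSets (n : ℕ) : IsPiSystem (cylSets (Ac := Ac) n) := by
  rintro _ ⟨m, hm, p, rfl⟩ _ ⟨m', hm', p', rfl⟩ hne
  obtain ⟨q0, hq0, hq0'⟩ := hne
  rcases le_total m m' with h | h
  · refine ⟨m', hm', p', ?_⟩
    refine cylSet_inter_of_le h fun t ht => ?_
    rw [← hq0 t ht, ← hq0' t (lt_of_lt_of_le ht h)]
  · refine ⟨m, hm, p, ?_⟩
    rw [Set.inter_comm]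
    refine cylSet_inter_of_le h fun t ht => ?_
    rw [← hq0 t (lt_of_lt_of_le ht h), ← hq0' t ht]

lemma coord_mem_generateFrom (n t : ℕ) (j : ι) (v : Ac j) :
    MeasurableSet[MeasurableSpace.generateFrom (cylSets (Ac := Ac) n)]
      {q : Play Ac | q t j = v} := by
  classical
  set m := max n (t + 1) with hm
  have htm : t < m := lt_of_lt_of_le (Nat.lt_succ_self t) (le_max_right _ _)
  have hset : {q : Play Ac | q t j = v}
      = ⋃ (w : {w : Fin m → ∀ k, Ac k // w ⟨t, htm⟩ j = v}), cylSet m (wbar m w.1) := by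
    ext q
    simp only [Set.mem_setOf_eq, Set.mem_iUnion]
    constructor
    · intro hq
      refine ⟨⟨fun s => q s, hq⟩, ?_⟩
      intro s hs
      rw [wbar_lt _ hs]
    · rintro ⟨w, hq⟩
      have h1 := hq t htm
      rw [wbar_lt _ htm] at h1
      rw [h1]
      exact w.2
  rw [hset]
  exact MeasurableSet.iUnion fun w =>
    MeasurableSpace.measurableSet_generateFrom ⟨m, le_max_left _ _, wbar m w.1, rfl⟩

lemma generateFrom_cylSets (n : ℕ) :
    (inferInstance : MeasurableSpace (Play Ac))
      = MeasurableSpace.generateFrom (cylSets (Ac := Ac) n) := by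
  refine le_antisymm ?_ (MeasurableSpace.generateFrom_le ?_)
  · have hev : ∀ t : ℕ, @Measurable (Play Ac) (∀ j, Ac j)
        (MeasurableSpace.generateFrom (cylSets (Ac := Ac) n)) _ (fun q => q t) := by
      intro t s _
      have hpre : (fun q : Play Ac => q t) ⁻¹' s
          = ⋃ v ∈ s, ⋂ j, {q : Play Ac | q t j = v j} := by
        ext q
        simp only [Set.mem_preimage, Set.mem_iUnion, Set.mem_iInter, Set.mem_setOf_eq]
        constructor
        · intro hq; exact ⟨q t, hq, fun j => rfl⟩
        · rintro ⟨v, hv, hqv⟩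
          have hqt : q t = v := funext hqv
          rwa [hqt]
      rw [hpre]
      exact MeasurableSet.biUnion s.to_countable fun v _ =>
        MeasurableSet.iInter fun j => coord_mem_generateFrom n t j (v j)
    exact iSup_le fun t => measurable_iff_comap_le.mp (hev t)
  · rintro _ ⟨m, _, p, rfl⟩
    exact measurableSet_cylSet m p

lemma measurable_splice (n : ℕ) (h : Play Ac) : Measurable (splice (Ac := Ac) n h) := by
  rw [measurable_pi_iff]
  intro t
  by_cases ht : t < n
  · simp only [splice, if_pos ht]
    exact measurable_const
  · simp only [splice, if_neg ht]
    exact measurable_pi_apply _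

lemma integrable_of_bdd {μ : Measure (Play Ac)} [IsFiniteMeasure μ] {g : Play Ac → ℝ}
    (hm : Measurable g) {C : ℝ} (hC : ∀ p, |g p| ≤ C) : Integrable g μ :=
  Integrable.mono' (integrable_const C) hm.aestronglyMeasurable
    (Filter.Eventually.of_forall fun p => by simpa [Real.norm_eq_abs] using hC p)

lemma abs_expPay_le (PM : PlayMeasure Ac) (σ : Profile Ac) {g : Play Ac → ℝ} {C : ℝ}
    (hC : ∀ p, |g p| ≤ C) : |expPay PM σ g| ≤ C := by
  haveI := PM.isProb σ
  have h := norm_integral_le_of_norm_le_const (μ := PM.μ σ) (f := g) (C := C)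
    (Filter.Eventually.of_forall fun p => by simpa [Real.norm_eq_abs] using hC p)
  simpa [expPay, Real.norm_eq_abs, measure_univ] using h

/-- The probability of the history `w` under the profile `σ`. -/
noncomputable def coefE (σ : Profile Ac) (n : ℕ) (w : Fin n → ∀ j, Ac j) : ℝ≥0∞ :=
  ∏ t ∈ Finset.range n, ∏ j, ((σ j).act t (wbar n w)) (wbar n w t j)

lemma PlayMeasure.cyl' (PM : PlayMeasure Ac) (σ : Profile Ac) (n : ℕ) (p : Play Ac) :
    PM.μ σ (cylSet n p) = ∏ t ∈ Finset.range n, ∏ j, ((σ j).act t p) (p t j) :=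
  PM.cyl σ n p

lemma coefE_eq_measure (PM : PlayMeasure Ac) (σ : Profile Ac) (n : ℕ)
    (w : Fin n → ∀ j, Ac j) : PM.μ σ (cylSet n (wbar n w)) = coefE σ n w :=
  PM.cyl σ n (wbar n w)

lemma coefE_ne_top (PM : PlayMeasure Ac) (σ : Profile Ac) (n : ℕ)
    (w : Fin n → ∀ j, Ac j) : coefE σ n w ≠ ∞ := by
  haveI := PM.isProb σ
  rw [← coefE_eq_measure PM σ n w]
  exact (measure_lt_top _ _).ne

lemma sum_coefE (PM : PlayMeasure Ac) (σ : Profile Ac) (n : ℕ) :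
    ∑ w : Fin n → ∀ j, Ac j, coefE σ n w = 1 := by
  classical
  haveI := PM.isProb σ
  have hdisj : Pairwise (Function.onFun Disjoint
      fun w : Fin n → ∀ j, Ac j => cylSet (Ac := Ac) n (wbar n w)) := by
    intro w w' hne
    rw [Function.onFun, Set.disjoint_left]
    intro q hq hq'
    apply hne
    funext t
    have h1 := hq t t.2
    have h2 := hq' t t.2
    rw [wbar_lt _ t.2] at h1
    rw [wbar_lt _ t.2] at h2
    rw [← h1, ← h2]
  have hunion : (⋃ w : Fin n → ∀ j, Ac j, cylSet (Ac := Ac) n (wbar n w)) = Set.univ := by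
    ext q
    simp only [Set.mem_iUnion, Set.mem_univ, iff_true]
    refine ⟨fun t => q t, fun t ht => ?_⟩
    rw [wbar_lt _ ht]
  have h := measure_iUnion (μ := PM.μ σ) hdisj fun w => measurableSet_cylSet n (wbar n w)
  rw [hunion, measure_univ, tsum_fintype] at h
  simp only [coefE_eq_measure PM σ n] at h
  exact h.symm

lemma splice_lt {n : ℕ} {h q : Play Ac} {t : ℕ} (ht : t < n) :
    splice n h q t = h t := if_pos ht

lemma splice_ge {n : ℕ} {h q : Play Ac} {t : ℕ} (ht : n ≤ t) :
    splice n h q t = q (t - n) := if_neg (by omega)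

lemma splice_add {n : ℕ} {h q : Play Ac} (s : ℕ) : splice n h q (n + s) = q s := by
  rw [splice_ge (Nat.le_add_right n s), Nat.add_sub_cancel_left]

lemma splice_preimage_bad {n m : ℕ} (hnm : n ≤ m) {p : Play Ac}
    {w : Fin n → ∀ j, Ac j} (hw : w ≠ fun t : Fin n => p t) :
    splice n (wbar n w) ⁻¹' cylSet m p = ∅ := by
  rw [Set.eq_empty_iff_forall_notMem]
  intro q hq
  apply hw
  funext t
  have h := hq (t : ℕ) (lt_of_lt_of_le t.2 hnm)
  rw [splice_lt t.2, wbar_lt _ t.2] at h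
  exact h

lemma splice_preimage_good {n m : ℕ} (hnm : n ≤ m) (p : Play Ac) :
    splice n (wbar n (fun t : Fin n => p t)) ⁻¹' cylSet m p
      = cylSet (m - n) (fun s => p (n + s)) := by
  ext q
  simp only [Set.mem_preimage, cylSet, Set.mem_setOf_eq]
  constructor
  · intro hq s hs
    have h := hq (n + s) (by omega)
    rwa [splice_add s] at h
  · intro hq t ht
    by_cases htn : t < n
    · rw [splice_lt htn, wbar_lt _ htn]
    · rw [splice_ge (Nat.le_of_not_lt htn)]
      have h3 := hq (t - n) (by omega)
      rw [h3, Nat.add_sub_cancel' (Nat.le_of_not_lt htn)]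

lemma splice_wbar_shift (n : ℕ) (p : Play Ac) :
    splice n (wbar n (fun t : Fin n => p t)) (fun s => p (n + s)) = p := by
  funext t
  by_cases htn : t < n
  · rw [splice_lt htn, wbar_lt _ htn]
  · rw [splice_ge (Nat.le_of_not_lt htn)]
    show p (n + (t - n)) = p t
    rw [Nat.add_sub_cancel' (Nat.le_of_not_lt htn)]

/-- Decomposition of the induced measure over histories of length `n`. -/
lemma measure_decomp (PM : PlayMeasure Ac) (σ : Profile Ac) (n : ℕ) :
    PM.μ σ = ∑ w : Fin n → ∀ j, Ac j, coefE σ n w •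
      Measure.map (splice n (wbar n w)) (PM.μ (fun j => (σ j).shift n (wbar n w))) := by
  classical
  haveI := PM.isProb σ
  haveI : ∀ w : Fin n → ∀ j, Ac j, IsProbabilityMeasure
      (PM.μ (fun j => (σ j).shift n (wbar n w))) := fun w => PM.isProb _
  refine ext_of_generate_finite (cylSets (Ac := Ac) n) (generateFrom_cylSets n)
    (isPiSystem_cylSets n) ?_ ?_
  · rintro _ ⟨m, hnm, p, rfl⟩
    rw [Measure.finset_sum_apply]
    set w0 : Fin n → ∀ j, Ac j := fun t => p t with hw0
    rw [Finset.sum_eq_single_of_mem w0 (Finset.mem_univ _)]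
    · rw [Measure.smul_apply,
        Measure.map_apply (measurable_splice n _) (measurableSet_cylSet m p),
        splice_preimage_good hnm p, PlayMeasure.cyl' PM _ (m - n) (fun s => p (n + s)),
        PlayMeasure.cyl' PM σ m p, smul_eq_mul]
      have hact : ∀ (j : ι) (t : ℕ),
          ((σ j).shift n (wbar n w0)).act t (fun s => p (n + s)) = (σ j).act (n + t) p := by
        intro j t
        show (σ j).act (n + t) (splice n (wbar n w0) fun s => p (n + s)) = _
        rw [hw0, splice_wbar_shift n p]
      have hcoef : coefE σ n w0 = ∏ t ∈ Finset.range n, ∏ j, ((σ j).act t p) (p t j) := by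
        unfold coefE
        refine Finset.prod_congr rfl fun t ht => ?_
        rw [Finset.mem_range] at ht
        refine Finset.prod_congr rfl fun j _ => ?_
        have ha : (σ j).act t (wbar n w0) = (σ j).act t p :=
          (σ j).depends_on_past t _ p fun s hs => by rw [wbar_lt _ (lt_trans hs ht)]
        rw [ha, wbar_lt _ ht]
      have hprod : ∏ t ∈ Finset.range (m - n), ∏ j,
          (((σ j).shift n (wbar n w0)).act t fun s => p (n + s)) ((fun s => p (n + s)) t j)
          = ∏ t ∈ Finset.range (m - n), ∏ j, ((σ j).act (n + t) p) (p (n + t) j) := by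
        refine Finset.prod_congr rfl fun t _ => Finset.prod_congr rfl fun j _ => ?_
        rw [hact j t]
      rw [hcoef, hprod,
        ← Finset.prod_range_add (fun t => ∏ j, ((σ j).act t p) (p t j)) n (m - n),
        Nat.add_sub_cancel' hnm]
    · intro w _ hw
      rw [Measure.smul_apply,
        Measure.map_apply (measurable_splice n _) (measurableSet_cylSet m p),
        splice_preimage_bad hnm hw, measure_empty, smul_zero]
  · rw [Measure.finset_sum_apply, measure_univ]
    have h : ∀ w : Fin n → ∀ j, Ac j, (coefE σ n w •
        Measure.map (splice n (wbar n w)) (PM.μ (fun j => (σ j).shift n (wbar n w))))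
          Set.univ = coefE σ n w := by
      intro w
      rw [Measure.smul_apply,
        Measure.map_apply (measurable_splice n _) MeasurableSet.univ,
        Set.preimage_univ, measure_univ, smul_eq_mul, mul_one]
    rw [Finset.sum_congr rfl fun w _ => h w, sum_coefE PM σ n]

lemma expPay_decomp (PM : PlayMeasure Ac) (σ : Profile Ac) {g : Play Ac → ℝ} {C : ℝ}
    (hm : Measurable g) (hC : ∀ p, |g p| ≤ C) (n : ℕ) :
    expPay PM σ g = ∑ w : Fin n → ∀ j, Ac j, (coefE σ n w).toReal *
      expPay PM (fun j => (σ j).shift n (wbar n w)) (fun q => g (splice n (wbar n w) q)) := by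
  classical
  have hint : ∀ w : Fin n → ∀ j, Ac j, Integrable g
      (coefE σ n w • Measure.map (splice n (wbar n w))
        (PM.μ (fun j => (σ j).shift n (wbar n w)))) := by
    intro w
    haveI := PM.isProb (fun j => (σ j).shift n (wbar n w))
    haveI : IsProbabilityMeasure (Measure.map (splice n (wbar n w))
        (PM.μ (fun j => (σ j).shift n (wbar n w)))) :=
      Measure.isProbabilityMeasure_map (measurable_splice n _).aemeasurable
    exact (integrable_of_bdd hm hC).smul_measure (coefE_ne_top PM σ n w)
  rw [expPay, measure_decomp PM σ n, integral_finset_sum_measure fun w _ => hint w]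
  refine Finset.sum_congr rfl fun w _ => ?_
  rw [integral_smul_measure,
    integral_map (measurable_splice n _).aemeasurable hm.aestronglyMeasurable,
    smul_eq_mul]
  rfl

lemma sum_coefE_toReal (PM : PlayMeasure Ac) (σ : Profile Ac) (n : ℕ) :
    ∑ w : Fin n → ∀ j, Ac j, (coefE σ n w).toReal = 1 := by
  rw [← ENNReal.toReal_sum fun w _ => coefE_ne_top PM σ n w, sum_coefE PM σ n,
    ENNReal.toReal_one]

/-- A strategy that plays arbitrarily during the first `n` stages, and then plays
the strategy `F w`, where `w` is the realized history of length `n`. -/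
noncomputable def glue {j : ι} (n : ℕ) (F : (Fin n → ∀ k, Ac k) → Strategy Ac j) :
    Strategy Ac j where
  act t p := if t < n then PMF.pure (Classical.arbitrary (Ac j))
    else (F fun s => p s).act (t - n) fun s => p (s + n)
  depends_on_past := by
    intro t p q hpq
    by_cases ht : t < n
    · simp [ht]
    · simp only [if_neg ht]
      have hF : (fun s : Fin n => p s) = fun s : Fin n => q s :=
        funext fun s => hpq s (lt_of_lt_of_le s.2 (Nat.le_of_not_lt ht))
      rw [hF]
      exact (F _).depends_on_past _ _ _ fun s hs => hpq (s + n) (by omega)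

lemma glue_shift {j : ι} (n : ℕ) (F : (Fin n → ∀ k, Ac k) → Strategy Ac j) (h : Play Ac) :
    (glue n F).shift n h = F fun s : Fin n => h s := by
  refine Strategy.ext2 ?_
  funext t q
  show (glue n F).act (n + t) (splice n h q) = (F fun s : Fin n => h s).act t q
  have h1 : ¬ n + t < n := by omega
  simp only [glue, if_neg h1]
  have e1 : (fun s : Fin n => splice n h q s) = fun s : Fin n => h s :=
    funext fun s => if_pos s.2
  have e2 : n + t - n = t := by omega
  have e3 : (fun s => splice n h q (s + n)) = q := by
    funext s
    have h4 : ¬ s + n < n := by omega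
    simp only [splice, if_neg h4, Nat.add_sub_cancel]
  rw [e1, e2, e3]

lemma shift_glue_wbar {j : ι} (n : ℕ) (F : (Fin n → ∀ k, Ac k) → Strategy Ac j)
    (w : Fin n → ∀ k, Ac k) : (glue n F).shift n (wbar n w) = F w := by
  rw [glue_shift]
  congr 1
  funext s
  rw [wbar_lt _ s.2]

lemma shift_update (τ : Profile Ac) (i : ι) (σi : Strategy Ac i) (n : ℕ) (h : Play Ac) :
    (fun j => ((Function.update τ i σi) j).shift n h)
      = Function.update (fun j => (τ j).shift n h) i (σi.shift n h) := by
  funext j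
  rcases eq_or_ne j i with rfl | hj
  · simp
  · simp [Function.update_of_ne hj]

lemma ciSup_comp_surj {α β : Type*} {e : α → β} (he : Function.Surjective e)
    (g : β → ℝ) : ⨆ a, g (e a) = ⨆ b, g b := by
  have h : Set.range (fun a => g (e a)) = Set.range g := by
    rw [show (fun a => g (e a)) = g ∘ e from rfl, Set.range_comp, he.range_eq, Set.image_univ]
  rw [iSup, iSup, h]

lemma ciInf_comp_surj {α β : Type*} {e : α → β} (he : Function.Surjective e)
    (g : β → ℝ) : ⨅ a, g (e a) = ⨅ b, g b := by
  have h : Set.range (fun a => g (e a)) = Set.range g := by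
    rw [show (fun a => g (e a)) = g ∘ e from rfl, Set.range_comp, he.range_eq, Set.image_univ]
  rw [iInf, iInf, h]

lemma subMinmax_rw (PM : PlayMeasure Ac) (f : Play Ac → ℝ) (i : ι) (n : ℕ) (h : Play Ac) :
    subMinmax PM f i n h = ⨅ τ : Profile Ac, ⨆ σi : Strategy Ac i,
      expPay PM (Function.update τ i σi) fun q => f (splice n h q) := by
  have hstep : ∀ (τ : Profile Ac) (σi : Strategy Ac i),
      subExp PM (Function.update τ i σi) f n h
        = expPay PM (Function.update (fun j => (τ j).shift n h) i (σi.shift n h))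
            fun q => f (splice n h q) := by
    intro τ σi
    show expPay PM (fun j => ((Function.update τ i σi) j).shift n h) _ = _
    rw [shift_update]
  have hsurj1 : Function.Surjective fun σi : Strategy Ac i => σi.shift n h :=
    fun ρ => ⟨glue n fun _ => ρ, glue_shift n _ h⟩
  have hsurj2 : Function.Surjective fun τ : Profile Ac => (fun j => (τ j).shift n h) :=
    fun τ' => ⟨fun j => glue n fun _ => τ' j, funext fun j => glue_shift n _ h⟩
  calc subMinmax PM f i n h
      = ⨅ τ : Profile Ac, ⨆ σi : Strategy Ac i,
          expPay PM (Function.update (fun j => (τ j).shift n h) i (σi.shift n h))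
            (fun q => f (splice n h q)) := by
        unfold subMinmax
        exact iInf_congr fun τ => iSup_congr fun σi => hstep τ σi
    _ = ⨅ τ : Profile Ac, ⨆ ρ : Strategy Ac i,
          expPay PM (Function.update (fun j => (τ j).shift n h) i ρ)
            (fun q => f (splice n h q)) :=
        iInf_congr fun τ => ciSup_comp_surj hsurj1
          (fun ρ => expPay PM (Function.update (fun j => (τ j).shift n h) i ρ)
            fun q => f (splice n h q))
    _ = ⨅ τ : Profile Ac, ⨆ ρ : Strategy Ac i,
          expPay PM (Function.update τ i ρ) (fun q => f (splice n h q)) :=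
        ciInf_comp_surj hsurj2
          (fun τ' => ⨆ ρ : Strategy Ac i, expPay PM (Function.update τ' i ρ)
            fun q => f (splice n h q))

lemma subMaxmin_rw (PM : PlayMeasure Ac) (f : Play Ac → ℝ) (i : ι) (n : ℕ) (h : Play Ac) :
    subMaxmin PM f i n h = ⨆ σi : Strategy Ac i, ⨅ τ : Profile Ac,
      expPay PM (Function.update τ i σi) fun q => f (splice n h q) := by
  have hstep : ∀ (τ : Profile Ac) (σi : Strategy Ac i),
      subExp PM (Function.update τ i σi) f n h
        = expPay PM (Function.update (fun j => (τ j).shift n h) i (σi.shift n h))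
            fun q => f (splice n h q) := by
    intro τ σi
    show expPay PM (fun j => ((Function.update τ i σi) j).shift n h) _ = _
    rw [shift_update]
  have hsurj1 : Function.Surjective fun σi : Strategy Ac i => σi.shift n h :=
    fun ρ => ⟨glue n fun _ => ρ, glue_shift n _ h⟩
  have hsurj2 : Function.Surjective fun τ : Profile Ac => (fun j => (τ j).shift n h) :=
    fun τ' => ⟨fun j => glue n fun _ => τ' j, funext fun j => glue_shift n _ h⟩
  calc subMaxmin PM f i n h
      = ⨆ σi : Strategy Ac i, ⨅ τ : Profile Ac,
          expPay PM (Function.update (fun j => (τ j).shift n h) i (σi.shift n h))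
            (fun q => f (splice n h q)) := by
        unfold subMaxmin
        exact iSup_congr fun σi => iInf_congr fun τ => hstep τ σi
    _ = ⨆ σi : Strategy Ac i, ⨅ τ : Profile Ac,
          expPay PM (Function.update τ i (σi.shift n h)) (fun q => f (splice n h q)) :=
        iSup_congr fun σi => ciInf_comp_surj hsurj2
          (fun τ' => expPay PM (Function.update τ' i (σi.shift n h))
            fun q => f (splice n h q))
    _ = ⨆ ρ : Strategy Ac i, ⨅ τ : Profile Ac,
          expPay PM (Function.update τ i ρ) (fun q => f (splice n h q)) :=
        ciSup_comp_surj hsurj1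
          (fun ρ => ⨅ τ : Profile Ac, expPay PM (Function.update τ i ρ)
            fun q => f (splice n h q))

lemma splice_tail_eq {n : ℕ} (a b q : Play Ac) (f : Play Ac → ℝ)
    (htail : TailMeasurable f) : f (splice n a q) = f (splice n b q) := by
  refine htail _ _ ⟨n, fun t ht => ?_⟩
  rw [splice_ge ht, splice_ge ht]

lemma minmax_splice (PM : PlayMeasure Ac) (f : Play Ac → ℝ) {C : ℝ}
    (hm : Measurable f) (hC : ∀ p, |f p| ≤ C) (htail : TailMeasurable f)
    (i : ι) (n : ℕ) (h : Play Ac) :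
    (⨅ τ : Profile Ac, ⨆ σi : Strategy Ac i,
        expPay PM (Function.update τ i σi) fun q => f (splice n h q))
      = minmax PM f i := by
  classical
  set g : Play Ac → ℝ := fun q => f (splice n h q) with hg
  have hg_spl : ∀ w : Fin n → ∀ j, Ac j,
      (fun q => f (splice n (wbar n w) q)) = g := fun w =>
    funext fun q => splice_tail_eq (wbar n w) h q f htail
  have hCg : ∀ p, |g p| ≤ C := fun p => hC _
  have hbAbove : ∀ (u : Play Ac → ℝ), (∀ p, |u p| ≤ C) → ∀ τ : Profile Ac,
      BddAbove (Set.range fun ρ : Strategy Ac i => expPay PM (Function.update τ i ρ) u) := by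
    intro u hu τ
    refine ⟨C, ?_⟩
    rintro _ ⟨ρ, rfl⟩
    exact (abs_le.mp (abs_expPay_le PM _ hu)).2
  have hbBelow : ∀ (u : Play Ac → ℝ), (∀ p, |u p| ≤ C) →
      BddBelow (Set.range fun τ : Profile Ac => ⨆ ρ : Strategy Ac i,
        expPay PM (Function.update τ i ρ) u) := by
    intro u hu
    refine ⟨-C, ?_⟩
    rintro _ ⟨τ, rfl⟩
    calc (-C) ≤ expPay PM (Function.update τ i (Classical.arbitrary _)) u :=
          (abs_le.mp (abs_expPay_le PM _ hu)).1
      _ ≤ ⨆ ρ : Strategy Ac i, expPay PM (Function.update τ i ρ) u :=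
          le_ciSup (hbAbove u hu τ) _
  refine le_antisymm ?_ ?_
  · -- value of the `g` game is at most `minmax f`
    refine le_of_forall_pos_le_add fun ε hε => ?_
    obtain ⟨τ, hτ⟩ := exists_lt_of_ciInf_lt (lt_add_of_pos_right (minmax PM f i) hε)
    have claim : ∃ w : Fin n → ∀ j, Ac j, ∀ ρ : Strategy Ac i,
        expPay PM (Function.update (fun j => (τ j).shift n (wbar n w)) i ρ) g
          ≤ minmax PM f i + ε := by
      by_contra hcon
      push_neg at hcon
      choose F hF using hcon
      set σi : Strategy Ac i := glue n F with hσi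
      have hterm : ∀ w : Fin n → ∀ j, Ac j,
          expPay PM (fun j => ((Function.update τ i σi) j).shift n (wbar n w))
            (fun q => f (splice n (wbar n w) q))
          = expPay PM (Function.update (fun j => (τ j).shift n (wbar n w)) i (F w)) g := by
        intro w
        rw [shift_update, hg_spl w, hσi, shift_glue_wbar]
      have hge : minmax PM f i + ε ≤ expPay PM (Function.update τ i σi) f := by
        rw [expPay_decomp PM _ hm hC n]
        calc minmax PM f i + ε
            = ∑ w : Fin n → ∀ j, Ac j, (coefE (Function.update τ i σi) n w).toReal *
              (minmax PM f i + ε) := by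
              rw [← Finset.sum_mul, sum_coefE_toReal PM _ n, one_mul]
          _ ≤ _ := by
              refine Finset.sum_le_sum fun w _ => ?_
              rw [hterm w]
              exact mul_le_mul_of_nonneg_left (hF w).le ENNReal.toReal_nonneg
      have hlt := lt_of_le_of_lt (le_ciSup (hbAbove f hC τ) σi) hτ
      exact absurd hge (not_le.mpr hlt)
    obtain ⟨w, hw⟩ := claim
    calc (⨅ τ' : Profile Ac, ⨆ ρ : Strategy Ac i, expPay PM (Function.update τ' i ρ) g)
        ≤ ⨆ ρ : Strategy Ac i,
            expPay PM (Function.update (fun j => (τ j).shift n (wbar n w)) i ρ) g :=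
          ciInf_le (hbBelow g hCg) _
      _ ≤ minmax PM f i + ε := ciSup_le hw
  · -- `minmax f` is at most the value of the `g` game
    refine le_of_forall_pos_le_add fun ε hε => ?_
    obtain ⟨τ', hτ'⟩ := exists_lt_of_ciInf_lt
      (lt_add_of_pos_right (⨅ τ : Profile Ac, ⨆ σi : Strategy Ac i,
        expPay PM (Function.update τ i σi) g) hε)
    set τ0 : Profile Ac := fun j => glue n fun _ => τ' j with hτ0
    have key : ∀ σi : Strategy Ac i, expPay PM (Function.update τ0 i σi) f
        ≤ (⨅ τ : Profile Ac, ⨆ ρ : Strategy Ac i,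
            expPay PM (Function.update τ i ρ) g) + ε := by
      intro σi
      have hterm : ∀ w : Fin n → ∀ j, Ac j,
          expPay PM (fun j => ((Function.update τ0 i σi) j).shift n (wbar n w))
            (fun q => f (splice n (wbar n w) q))
          = expPay PM (Function.update τ' i (σi.shift n (wbar n w))) g := by
        intro w
        rw [shift_update, hg_spl w]
        have h1 : (fun j => (τ0 j).shift n (wbar n w)) = τ' := by
          funext j
          rw [hτ0]
          exact shift_glue_wbar n _ w
        rw [h1]
      rw [expPay_decomp PM _ hm hC n]
      calc ∑ w : Fin n → ∀ j, Ac j, (coefE (Function.update τ0 i σi) n w).toReal *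
            expPay PM (fun j => ((Function.update τ0 i σi) j).shift n (wbar n w))
              (fun q => f (splice n (wbar n w) q))
          ≤ ∑ w : Fin n → ∀ j, Ac j, (coefE (Function.update τ0 i σi) n w).toReal *
            ((⨅ τ : Profile Ac, ⨆ ρ : Strategy Ac i,
              expPay PM (Function.update τ i ρ) g) + ε) := by
            refine Finset.sum_le_sum fun w _ => ?_
            rw [hterm w]
            refine mul_le_mul_of_nonneg_left ?_ ENNReal.toReal_nonneg
            exact le_of_lt (lt_of_le_of_lt (le_ciSup (hbAbove g hCg τ') _) hτ')
        _ = _ := by rw [← Finset.sum_mul, sum_coefE_toReal PM _ n, one_mul]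
    calc minmax PM f i ≤ ⨆ σi : Strategy Ac i, expPay PM (Function.update τ0 i σi) f :=
          ciInf_le (hbBelow f hC) τ0
      _ ≤ _ := ciSup_le key

lemma maxmin_splice (PM : PlayMeasure Ac) (f : Play Ac → ℝ) {C : ℝ}
    (hm : Measurable f) (hC : ∀ p, |f p| ≤ C) (htail : TailMeasurable f)
    (i : ι) (n : ℕ) (h : Play Ac) :
    (⨆ σi : Strategy Ac i, ⨅ τ : Profile Ac,
        expPay PM (Function.update τ i σi) fun q => f (splice n h q))
      = maxmin PM f i := by
  classical
  set g : Play Ac → ℝ := fun q => f (splice n h q) with hg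
  have hg_spl : ∀ w : Fin n → ∀ j, Ac j,
      (fun q => f (splice n (wbar n w) q)) = g := fun w =>
    funext fun q => splice_tail_eq (wbar n w) h q f htail
  have hCg : ∀ p, |g p| ≤ C := fun p => hC _
  have hbBelow : ∀ (u : Play Ac → ℝ), (∀ p, |u p| ≤ C) → ∀ ρ : Strategy Ac i,
      BddBelow (Set.range fun τ : Profile Ac => expPay PM (Function.update τ i ρ) u) := by
    intro u hu ρ
    refine ⟨-C, ?_⟩
    rintro _ ⟨τ, rfl⟩
    exact (abs_le.mp (abs_expPay_le PM _ hu)).1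
  have hbAbove : ∀ (u : Play Ac → ℝ), (∀ p, |u p| ≤ C) →
      BddAbove (Set.range fun ρ : Strategy Ac i => ⨅ τ : Profile Ac,
        expPay PM (Function.update τ i ρ) u) := by
    intro u hu
    refine ⟨C, ?_⟩
    rintro _ ⟨ρ, rfl⟩
    calc (⨅ τ : Profile Ac, expPay PM (Function.update τ i ρ) u)
        ≤ expPay PM (Function.update (Classical.arbitrary _) i ρ) u :=
          ciInf_le (hbBelow u hu ρ) _
      _ ≤ C := (abs_le.mp (abs_expPay_le PM _ hu)).2
  refine le_antisymm ?_ ?_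
  · -- value of the `g` game is at most `maxmin f`
    refine le_of_forall_pos_le_add fun ε hε => ?_
    rw [← sub_le_iff_le_add]
    obtain ⟨ρ', hρ'⟩ := exists_lt_of_lt_ciSup
      (sub_lt_self (⨆ σi : Strategy Ac i, ⨅ τ : Profile Ac,
        expPay PM (Function.update τ i σi) g) hε)
    set σ0 : Strategy Ac i := glue n fun _ => ρ' with hσ0
    have key : ∀ τ : Profile Ac,
        (⨆ σi : Strategy Ac i, ⨅ τ' : Profile Ac,
          expPay PM (Function.update τ' i σi) g) - ε
        ≤ expPay PM (Function.update τ i σ0) f := by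
      intro τ
      have hterm : ∀ w : Fin n → ∀ j, Ac j,
          expPay PM (fun j => ((Function.update τ i σ0) j).shift n (wbar n w))
            (fun q => f (splice n (wbar n w) q))
          = expPay PM (Function.update (fun j => (τ j).shift n (wbar n w)) i ρ') g := by
        intro w
        rw [shift_update, hg_spl w, hσ0, shift_glue_wbar]
      rw [expPay_decomp PM _ hm hC n]
      calc (⨆ σi : Strategy Ac i, ⨅ τ' : Profile Ac,
              expPay PM (Function.update τ' i σi) g) - ε
          = ∑ w : Fin n → ∀ j, Ac j, (coefE (Function.update τ i σ0) n w).toReal *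
            ((⨆ σi : Strategy Ac i, ⨅ τ' : Profile Ac,
              expPay PM (Function.update τ' i σi) g) - ε) := by
            rw [← Finset.sum_mul, sum_coefE_toReal PM _ n, one_mul]
        _ ≤ _ := by
            refine Finset.sum_le_sum fun w _ => ?_
            rw [hterm w]
            refine mul_le_mul_of_nonneg_left ?_ ENNReal.toReal_nonneg
            exact le_trans hρ'.le (ciInf_le (hbBelow g hCg ρ') _)
    calc (⨆ σi : Strategy Ac i, ⨅ τ' : Profile Ac,
            expPay PM (Function.update τ' i σi) g) - ε
        ≤ ⨅ τ : Profile Ac, expPay PM (Function.update τ i σ0) f := le_ciInf key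
      _ ≤ maxmin PM f i := le_ciSup (hbAbove f hC) σ0
  · -- `maxmin f` is at most the value of the `g` game
    refine le_of_forall_pos_le_add fun ε hε => ?_
    rw [← sub_le_iff_le_add]
    obtain ⟨ρ, hρ⟩ := exists_lt_of_lt_ciSup (sub_lt_self (maxmin PM f i) hε)
    have claim : ∃ w : Fin n → ∀ j, Ac j, ∀ τ' : Profile Ac, maxmin PM f i - ε
        ≤ expPay PM (Function.update τ' i (ρ.shift n (wbar n w))) g := by
      by_contra hcon
      push_neg at hcon
      choose T hT using hcon
      set τ0 : Profile Ac := fun j => glue n fun w => (T w) j with hτ0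
      have hterm : ∀ w : Fin n → ∀ j, Ac j,
          expPay PM (fun j => ((Function.update τ0 i ρ) j).shift n (wbar n w))
            (fun q => f (splice n (wbar n w) q))
          = expPay PM (Function.update (T w) i (ρ.shift n (wbar n w))) g := by
        intro w
        rw [shift_update, hg_spl w]
        have h1 : (fun j => (τ0 j).shift n (wbar n w)) = T w := by
          funext j
          rw [hτ0]
          exact shift_glue_wbar n _ w
        rw [h1]
      have hle : expPay PM (Function.update τ0 i ρ) f ≤ maxmin PM f i - ε := by
        rw [expPay_decomp PM _ hm hC n]
        calc ∑ w : Fin n → ∀ j, Ac j, (coefE (Function.update τ0 i ρ) n w).toReal *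
              expPay PM (fun j => ((Function.update τ0 i ρ) j).shift n (wbar n w))
                (fun q => f (splice n (wbar n w) q))
            ≤ ∑ w : Fin n → ∀ j, Ac j, (coefE (Function.update τ0 i ρ) n w).toReal *
              (maxmin PM f i - ε) := by
              refine Finset.sum_le_sum fun w _ => ?_
              rw [hterm w]
              exact mul_le_mul_of_nonneg_left (hT w).le ENNReal.toReal_nonneg
          _ = maxmin PM f i - ε := by rw [← Finset.sum_mul, sum_coefE_toReal PM _ n, one_mul]
      have hgt := lt_of_lt_of_le hρ (ciInf_le (hbBelow f hC ρ) τ0)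
      exact absurd hle (not_le.mpr hgt)
    obtain ⟨w, hw⟩ := claim
    calc maxmin PM f i - ε
        ≤ ⨅ τ' : Profile Ac, expPay PM (Function.update τ' i (ρ.shift n (wbar n w))) g :=
          le_ciInf hw
      _ ≤ ⨆ σi : Strategy Ac i, ⨅ τ' : Profile Ac,
            expPay PM (Function.update τ' i σi) g := le_ciSup (hbAbove g hCg) _

/-- If player `i`'s payoff function is tail-measurable, then her minmax
value and maxmin value are independent of the history. -/
theorem minmax_maxmin_indep_of_history (PM : PlayMeasure Ac) (f : ι → Play Ac → ℝ)
    (hbdd : ∀ j, BddPayoff (f j)) (hmeas : ∀ j, Measurable (f j))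
    (i : ι) (htail : TailMeasurable (f i)) :
    (∀ (n : ℕ) (h : Play Ac), subMinmax PM (f i) i n h = minmax PM (f i) i) ∧
    (∀ (n : ℕ) (h : Play Ac), subMaxmin PM (f i) i n h = maxmin PM (f i) i) := by
  obtain ⟨C, hC⟩ := hbdd i
  constructor
  · intro n h
    rw [subMinmax_rw PM (f i) i n h, minmax_splice PM (f i) (hmeas i) hC htail i n h]
  · intro n h
    rw [subMaxmin_rw PM (f i) i n h, maxmin_splice PM (f i) (hmeas i) hC htail i n h]

end Blackwell
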